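/- Let p and q be probability distributions on k elements with non-increasingly ordered entries such that p ≻ q, and let δ ≥ 0. Then the steepest δ-approximations satisfy p̄^(δ) ≻ q̄^(δ). -/
import Mathlib


open Finset

noncomputable section

/-- The ℓ¹ distance `‖a − b‖ = Σᵢ |aᵢ − bᵢ|` between two vectors in `ℝ^k`. -/
def l1dist {k : ℕ} (a b : Fin k → ℝ) : ℝ := ∑ i, |a i - b i|

/-- A probability distribution on `k` elements: nonnegative entries summing to 1. -/
def IsProbDist {k : ℕ} (p : Fin k → ℝ) : Prop := (∀ i, 0 ≤ p i) ∧ ∑ i, p i = 1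

/-- The vector `a` rearranged in non-increasing order, `a↓`. -/
def descSort {k : ℕ} (a : Fin k → ℝ) : Fin k → ℝ := fun i => a (Tuple.sort a i.rev)

/-- The sum of the first `l` entries of `a` (1-based indexing: entries `1,…,l`). -/
def psum {k : ℕ} (a : Fin k → ℝ) (l : ℕ) : ℝ :=
  ∑ i ∈ univ.filter (fun i : Fin k => (i : ℕ) < l), a i

/-- The sum of the entries of `a` from position `l` to `k` (1-based indexing). -/
def tailSum {k : ℕ} (a : Fin k → ℝ) (l : ℕ) : ℝ :=
  ∑ i ∈ univ.filter (fun i : Fin k => l ≤ (i : ℕ) + 1), a i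

/-- `a` majorizes `b` (`a ≻ b`): the total sums agree and all partial sums of the
non-increasing rearrangements satisfy `Σ_{i=1}^l a↓ᵢ ≥ Σ_{i=1}^l b↓ᵢ` for `l = 1,…,k`. -/
def Majorizes {k : ℕ} (a b : Fin k → ℝ) : Prop :=
  (∑ i, a i = ∑ i, b i) ∧
  ∀ l : ℕ, 1 ≤ l → l ≤ k → psum (descSort b) l ≤ psum (descSort a) l

/-- The distribution `e₁ = (1,0,…,0)`. -/
def e1 (k : ℕ) : Fin k → ℝ := fun i => if (i : ℕ) = 0 then 1 else 0

/-- The uniform distribution `η = (1/k,…,1/k)`. -/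
def unif (k : ℕ) : Fin k → ℝ := fun _ => (k : ℝ)⁻¹

/-- The unnormalised vector `r` in the construction of the steepest approximation:
`r₁ = p₁ + δ/2`, `rᵢ = pᵢ` otherwise. -/
def steepR {k : ℕ} (δ : ℝ) (p : Fin k → ℝ) : Fin k → ℝ :=
  fun i => if (i : ℕ) = 0 then p i + δ / 2 else p i

/-- `lstar ∈ {1,…,k}` is the truncation index of the steepest `δ`-approximation of `p`:
`Σ_{i=1}^{l*} rᵢ ≤ 1 < Σ_{i=1}^{l*+1} rᵢ` (the second sum being meaningful for `l* < k`). -/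
def IsTruncIdx {k : ℕ} (δ : ℝ) (p : Fin k → ℝ) (lstar : ℕ) : Prop :=
  1 ≤ lstar ∧ lstar ≤ k ∧ psum (steepR δ p) lstar ≤ 1 ∧
    (lstar < k → 1 < psum (steepR δ p) (lstar + 1))

/-- `pbar` is the steepest `δ`-approximation `p̄^(δ)` of `p` (assumed non-increasingly
ordered): if `‖p − e₁‖ ≤ δ` then `pbar = e₁`; otherwise `pbar` agrees with `r` on the
first `l*` entries, has `1 − Σ_{i=1}^{l*} rᵢ` at position `l*+1`, and `0` afterwards. -/
def IsSteepest {k : ℕ} (δ : ℝ) (p pbar : Fin k → ℝ) : Prop :=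
  (l1dist p (e1 k) ≤ δ ∧ pbar = e1 k) ∨
  (δ < l1dist p (e1 k) ∧ ∃ lstar : ℕ, IsTruncIdx δ p lstar ∧
    ∀ i : Fin k, pbar i =
      if (i : ℕ) < lstar then steepR δ p i
      else if (i : ℕ) = lstar then 1 - psum (steepR δ p) lstar
      else 0)

/-- `ε(x) = Σ_{i : pᵢ ≥ x} (pᵢ − x)`. -/
def epsFn {k : ℕ} (p : Fin k → ℝ) (x : ℝ) : ℝ :=
  ∑ i ∈ univ.filter (fun i : Fin k => x ≤ p i), (p i - x)

/-- `γ(y) = Σ_{i : pᵢ ≤ y} (y − pᵢ)`. -/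
def gammaFn {k : ℕ} (p : Fin k → ℝ) (y : ℝ) : ℝ :=
  ∑ i ∈ univ.filter (fun i : Fin k => p i ≤ y), (y - p i)

/-- `pflat` is the flattest `δ`-approximation of `p` built from the cutting level `x*` and
the filling level `y*`: `x*, y* ∈ [0,1]`, `ε(x*) = γ(y*) = δ/2`, and `pflat` equals `x*`
where `pᵢ ≥ x*`, equals `y*` where `pᵢ ≤ y*`, and equals `pᵢ` otherwise. -/
def IsFlattestWith {k : ℕ} (δ : ℝ) (p pflat : Fin k → ℝ) (x y : ℝ) : Prop :=
  x ∈ Set.Icc (0 : ℝ) 1 ∧ y ∈ Set.Icc (0 : ℝ) 1 ∧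
  epsFn p x = δ / 2 ∧ gammaFn p y = δ / 2 ∧
  ∀ i : Fin k, pflat i = if x ≤ p i then x else if p i ≤ y then y else p i

/-- `pflat` is the flattest `δ`-approximation `p̲^(δ)` of `p` (assumed non-increasingly
ordered): if `‖p − η‖ ≤ δ` then `pflat = η`; otherwise it is obtained by cutting at
level `x*` and filling at level `y*`. -/
def IsFlattest {k : ℕ} (δ : ℝ) (p pflat : Fin k → ℝ) : Prop :=
  (l1dist p (unif k) ≤ δ ∧ pflat = unif k) ∨
  (δ < l1dist p (unif k) ∧ ∃ x y : ℝ, IsFlattestWith δ p pflat x y)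

end

section AuxSteep

open Finset

lemma descSort_eq_self {k : ℕ} {a : Fin k → ℝ} (ha : Antitone a) : descSort a = a := by
  have hmono : Monotone (a ∘ (Fin.revPerm : Equiv.Perm (Fin k))) := by
    intro i j hij
    exact ha (by simpa using Fin.rev_le_rev.mpr hij)
  have h1 : a ∘ (Fin.revPerm : Equiv.Perm (Fin k)) = a ∘ Tuple.sort a :=
    Tuple.comp_sort_eq_comp_iff_monotone.mpr hmono
  funext i
  have h2 := congrFun h1 i.rev
  simp only [Function.comp_apply, Fin.revPerm_apply, Fin.rev_rev] at h2
  simpa [descSort] using h2.symm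

lemma psum_mono_nonneg {k : ℕ} {a : Fin k → ℝ} (ha : ∀ i, 0 ≤ a i) {l m : ℕ} (h : l ≤ m) :
    psum a l ≤ psum a m := by
  apply Finset.sum_le_sum_of_subset_of_nonneg
  · intro i hi
    simp only [mem_filter, mem_univ, true_and] at *
    omega
  · intro i _ _
    exact ha i

lemma psum_univ {k : ℕ} (a : Fin k → ℝ) {l : ℕ} (h : k ≤ l) : psum a l = ∑ i, a i := by
  unfold psum
  rw [Finset.filter_true_of_mem]
  intro i _
  exact lt_of_lt_of_le i.isLt h

lemma psum_congr {k : ℕ} {a b : Fin k → ℝ} (l : ℕ) (h : ∀ i : Fin k, (i : ℕ) < l → a i = b i) :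
    psum a l = psum b l :=
  Finset.sum_congr rfl (fun i hi => h i (by simpa using (mem_filter.mp hi).2))

lemma psum_succ {k : ℕ} (a : Fin k → ℝ) {l : ℕ} (hl : l < k) :
    psum a (l + 1) = psum a l + a ⟨l, hl⟩ := by
  unfold psum
  have hins : (univ.filter (fun i : Fin k => (i : ℕ) < l + 1)) =
      insert ⟨l, hl⟩ (univ.filter (fun i : Fin k => (i : ℕ) < l)) := by
    ext i
    simp [Fin.ext_iff]
    omega
  rw [hins, Finset.sum_insert (by simp)]
  ring

lemma psum_eq_of_tail_zero {k : ℕ} {a : Fin k → ℝ} {m l : ℕ} (h : m ≤ l)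
    (hz : ∀ i : Fin k, m ≤ (i : ℕ) → a i = 0) : psum a l = psum a m := by
  unfold psum
  refine (Finset.sum_subset ?_ ?_).symm
  · intro i hi
    simp only [mem_filter, mem_univ, true_and] at *
    omega
  · intro i _ hi
    simp only [mem_filter, mem_univ, true_and, not_lt] at hi
    exact hz i hi

lemma steepR_nonneg {k : ℕ} {δ : ℝ} (hδ : 0 ≤ δ) {p : Fin k → ℝ} (hp : ∀ i, 0 ≤ p i)
    (i : Fin k) : 0 ≤ steepR δ p i := by
  unfold steepR
  split
  · have := hp i; linarith
  · exact hp i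

lemma le_steepR {k : ℕ} {δ : ℝ} (hδ : 0 ≤ δ) (p : Fin k → ℝ) (i : Fin k) :
    p i ≤ steepR δ p i := by
  unfold steepR
  split
  · linarith
  · exact le_refl _

lemma steepR_antitone {k : ℕ} {δ : ℝ} (hδ : 0 ≤ δ) {p : Fin k → ℝ} (hpord : Antitone p) :
    Antitone (steepR δ p) := by
  intro i j hij
  have hijn : (i : ℕ) ≤ (j : ℕ) := hij
  rcases eq_or_ne ((j : ℕ)) 0 with hj | hj
  · have hij : i = j := Fin.ext (by omega)
    rw [hij]
  · calc steepR δ p j = p j := by simp [steepR, hj]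
      _ ≤ p i := hpord hij
      _ ≤ steepR δ p i := le_steepR hδ p i

lemma psum_steepR {k : ℕ} (δ : ℝ) (p : Fin k → ℝ) {l : ℕ} (hl : 1 ≤ l) (hk : 0 < k) :
    psum (steepR δ p) l = psum p l + δ / 2 := by
  have h1 : ∀ i ∈ univ.filter (fun i : Fin k => (i : ℕ) < l),
      steepR δ p i = p i + (if i = (⟨0, hk⟩ : Fin k) then δ / 2 else 0) := by
    intro i _
    by_cases h : (i : ℕ) = 0
    · have hi : i = ⟨0, hk⟩ := Fin.ext h
      simp [steepR, hi]
    · have hi : i ≠ ⟨0, hk⟩ := by simp [Fin.ext_iff, h]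
      simp [steepR, h, hi]
  have hmem : (⟨0, hk⟩ : Fin k) ∈ univ.filter (fun i : Fin k => (i : ℕ) < l) := by
    simp
    omega
  unfold psum
  rw [Finset.sum_congr rfl h1, Finset.sum_add_distrib,
    Finset.sum_ite_eq' _ (⟨0, hk⟩ : Fin k), if_pos hmem]

lemma e1_antitone (k : ℕ) : Antitone (e1 k) := by
  intro i j hij
  have hijn : (i : ℕ) ≤ (j : ℕ) := hij
  unfold e1
  by_cases hj : (j : ℕ) = 0
  · have hi : (i : ℕ) = 0 := by omega
    simp [hj, hi]
  · simp only [hj, if_false]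
    split <;> norm_num

lemma psum_e1 {k : ℕ} (hk : 0 < k) {l : ℕ} (hl : 1 ≤ l) : psum (e1 k) l = 1 := by
  have h1 : ∀ i ∈ univ.filter (fun i : Fin k => (i : ℕ) < l),
      e1 k i = (if i = (⟨0, hk⟩ : Fin k) then (1 : ℝ) else 0) := by
    intro i _
    simp [e1, Fin.ext_iff]
  have hmem : (⟨0, hk⟩ : Fin k) ∈ univ.filter (fun i : Fin k => (i : ℕ) < l) := by
    simp
    omega
  unfold psum
  rw [Finset.sum_congr rfl h1, Finset.sum_ite_eq' _ (⟨0, hk⟩ : Fin k), if_pos hmem]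

lemma half_l1dist_e1 {k : ℕ} (hk : 0 < k) {p : Fin k → ℝ} (hp : IsProbDist p) :
    2 * (1 - p ⟨0, hk⟩) ≤ l1dist p (e1 k) := by
  obtain ⟨hnn, hsum⟩ := hp
  have h1 : ∀ i : Fin k,
      (p i + if i = (⟨0, hk⟩ : Fin k) then 1 - 2 * p i else 0) ≤ |p i - e1 k i| := by
    intro i
    by_cases h : i = ⟨0, hk⟩
    · subst h
      have he : e1 k ⟨0, hk⟩ = 1 := by simp [e1]
      rw [he, if_pos rfl, abs_sub_comm]
      have := le_abs_self (1 - p ⟨0, hk⟩)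
      linarith
    · have hne : (i : ℕ) ≠ 0 := by
        simpa [Fin.ext_iff] using h
      simp only [if_neg h, e1, if_neg hne, add_zero, sub_zero]
      exact le_abs_self _
  calc 2 * (1 - p ⟨0, hk⟩)
      = ∑ i, (p i + if i = (⟨0, hk⟩ : Fin k) then 1 - 2 * p i else 0) := by
        rw [Finset.sum_add_distrib, hsum, Finset.sum_ite_eq' univ (⟨0, hk⟩ : Fin k),
          if_pos (mem_univ _)]
        ring
    _ ≤ ∑ i, |p i - e1 k i| := Finset.sum_le_sum (fun i _ => h1 i)
    _ = l1dist p (e1 k) := rfl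

lemma psum_le_one {k : ℕ} {p : Fin k → ℝ} (hp : IsProbDist p) (l : ℕ) : psum p l ≤ 1 := by
  obtain ⟨hnn, hsum⟩ := hp
  rcases le_total l k with hc | hc
  · rw [← hsum, ← psum_univ p (le_refl k)]
    exact psum_mono_nonneg hnn hc
  · rw [psum_univ p hc, hsum]

lemma steepest_facts {k : ℕ} (hk : 0 < k) {δ : ℝ} (hδ : 0 ≤ δ) {p pbar : Fin k → ℝ}
    (hp : IsProbDist p) (hpord : Antitone p) (h : IsSteepest δ p pbar) :
    Antitone pbar ∧ ∀ l : ℕ, 1 ≤ l → psum pbar l = min 1 (psum p l + δ / 2) := by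
  obtain ⟨hnn, hsum⟩ := hp
  rcases h with ⟨hdist, rfl⟩ | ⟨hdist, lstar, ⟨hl1, hlk, hle, hgt⟩, hdef⟩
  · refine ⟨e1_antitone k, fun l hl => ?_⟩
    rw [psum_e1 hk hl]
    have h2 : 2 * (1 - p ⟨0, hk⟩) ≤ δ := le_trans (half_l1dist_e1 hk ⟨hnn, hsum⟩) hdist
    have h3 : p ⟨0, hk⟩ ≤ psum p l := by
      have hml : psum p 1 ≤ psum p l := psum_mono_nonneg hnn hl
      have h0 : psum p 0 = 0 := by
        unfold psum
        rw [Finset.filter_false_of_mem (by intro i _; omega)]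
        simp
      have h01 : psum p 1 = psum p 0 + p ⟨0, hk⟩ := psum_succ p hk
      linarith
    symm
    rw [min_eq_left (by linarith)]
  · have hrnn : ∀ i, 0 ≤ steepR δ p i := steepR_nonneg hδ hnn
    have hrant : Antitone (steepR δ p) := steepR_antitone hδ hpord
    rcases eq_or_lt_of_le hlk with heq | hlt
    · -- lstar = k forces δ = 0 and pbar = p
      have hδ0 : δ = 0 := by
        have h1 := hle
        rw [heq, psum_steepR δ p hk hk, psum_univ p (le_refl k), hsum] at h1
        linarith
      have hpb : ∀ i : Fin k, pbar i = p i := by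
        intro i
        rw [hdef i, if_pos (heq ▸ i.isLt)]
        simp [steepR, hδ0]
      refine ⟨(funext hpb) ▸ hpord, fun l hl => ?_⟩
      have hple : psum p l ≤ 1 := psum_le_one ⟨hnn, hsum⟩ l
      have heq2 : psum p l + δ / 2 = psum p l := by rw [hδ0]; ring
      rw [heq2, min_eq_right hple]
      exact psum_congr l (fun i _ => hpb i)
    · -- main case: lstar < k
      have hres0 : 0 ≤ 1 - psum (steepR δ p) lstar := by linarith
      have hsucc : psum (steepR δ p) (lstar + 1) =
          psum (steepR δ p) lstar + steepR δ p ⟨lstar, hlt⟩ := psum_succ _ hlt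
      have hreslt : 1 - psum (steepR δ p) lstar < steepR δ p ⟨lstar, hlt⟩ := by
        have hg := hgt hlt
        rw [hsucc] at hg
        linarith
      have hant : Antitone pbar := by
        intro i j hij
        have hijn : (i : ℕ) ≤ (j : ℕ) := hij
        rw [hdef i, hdef j]
        by_cases hj1 : (j : ℕ) < lstar
        · rw [if_pos hj1, if_pos (by omega)]
          exact hrant hij
        · by_cases hj2 : (j : ℕ) = lstar
          · rw [if_neg hj1, if_pos hj2]
            by_cases hi1 : (i : ℕ) < lstar
            · rw [if_pos hi1]
              have hle2 : i ≤ (⟨lstar, hlt⟩ : Fin k) := by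
                rw [Fin.le_def]
                exact le_of_lt hi1
              have := hrant hle2
              linarith
            · rw [if_neg hi1, if_pos (by omega)]
          · rw [if_neg hj1, if_neg hj2]
            split
            · exact hrnn i
            · split
              · exact hres0
              · exact le_refl _
      refine ⟨hant, fun l hl => ?_⟩
      have hrl : psum (steepR δ p) l = psum p l + δ / 2 := psum_steepR δ p hl hk
      by_cases hcase : l ≤ lstar
      · have h1 : psum pbar l = psum (steepR δ p) l :=
          psum_congr l (fun i hi => by rw [hdef i, if_pos (by omega)])
        have h2 : psum (steepR δ p) l ≤ 1 :=
          le_trans (psum_mono_nonneg hrnn hcase) hle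
        rw [h1, hrl, min_eq_right (by linarith)]
      · push_neg at hcase
        have h2 : 1 < psum (steepR δ p) l :=
          lt_of_lt_of_le (hgt hlt) (psum_mono_nonneg hrnn (by omega))
        have h3 : psum pbar l = psum pbar (lstar + 1) :=
          psum_eq_of_tail_zero (by omega)
            (fun i hi => by rw [hdef i, if_neg (by omega), if_neg (by omega)])
        have h4 : psum pbar (lstar + 1) = psum pbar lstar + pbar ⟨lstar, hlt⟩ :=
          psum_succ pbar hlt
        have h5 : psum pbar lstar = psum (steepR δ p) lstar :=
          psum_congr lstar (fun i hi => by rw [hdef i, if_pos hi])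
        have h6 : pbar ⟨lstar, hlt⟩ = 1 - psum (steepR δ p) lstar := by
          rw [hdef ⟨lstar, hlt⟩, if_neg (by simp), if_pos (by simp)]
        rw [h3, h4, h5, h6, min_eq_left (by linarith)]
        ring

end AuxSteep

/-- the steepest `δ`-approximation preserves the majorization order. -/
theorem steepest_preserves_majorization {k : ℕ} (δ : ℝ) (hδ : 0 ≤ δ)
    (p q : Fin k → ℝ) (hp : IsProbDist p) (hq : IsProbDist q)
    (hpord : Antitone p) (hqord : Antitone q) (hmaj : Majorizes p q)
    (pbar qbar : Fin k → ℝ)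
    (hpbar : IsSteepest δ p pbar) (hqbar : IsSteepest δ q qbar) :
    Majorizes pbar qbar := by
  rcases Nat.eq_zero_or_pos k with hk0 | hk
  · subst hk0
    exact absurd hp.2 (by simp)
  obtain ⟨hpA, hpP⟩ := steepest_facts hk hδ hp hpord hpbar
  obtain ⟨hqA, hqP⟩ := steepest_facts hk hδ hq hqord hqbar
  constructor
  · rw [← psum_univ pbar (le_refl k), ← psum_univ qbar (le_refl k), hpP k hk, hqP k hk,
      psum_univ p (le_refl k), psum_univ q (le_refl k), hp.2, hq.2]
  · intro l hl1 hlk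
    rw [descSort_eq_self hpA, descSort_eq_self hqA, hpP l hl1, hqP l hl1]
    have hm := hmaj.2 l hl1 hlk
    rw [descSort_eq_self hpord, descSort_eq_self hqord] at hm
    exact min_le_min (le_refl _) (by linarith)
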